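/- Let M be a symmetric positive semidefinite p×p matrix, c ∈ Range(M), and suppose d ∈ ℝ^p satisfies M d = c, c^T d = 1, and ∑_ℓ (d^T f_ℓ(x))² ≤ 1 for all x ∈ X, where M = ∑_r p_r ∑_ℓ f_ℓ(x_r) f_ℓ(x_r)^T is the information matrix of a design ξ. Then for every design η on X with finitely many support points and information matrix M(η), and every u with M(η) u = c, one has c^T u ≥ 1 = c^T d. That is, ξ minimizes c^T M(η)^- c over all designs for which c is estimable. -/
import Mathlib


open Matrix Finset


open Matrix in
private lemma sum_mulVec' {p' : ℕ} {ι : Type*} (s : Finset ι)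
    (A : ι → Matrix (Fin p') (Fin p') ℝ) (u : Fin p' → ℝ) :
    (∑ i ∈ s, A i) *ᵥ u = ∑ i ∈ s, A i *ᵥ u := by
  induction s using Finset.cons_induction with
  | empty => simp
  | cons a s ha ih => simp [Finset.sum_cons, Matrix.add_mulVec, ih]

open Matrix in
private lemma dotProduct_sum' {p' : ℕ} (v : Fin p' → ℝ) {ι : Type*} (s : Finset ι)
    (g : ι → Fin p' → ℝ) : v ⬝ᵥ (∑ i ∈ s, g i) = ∑ i ∈ s, v ⬝ᵥ g i := by
  induction s using Finset.cons_induction with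
  | empty => simp
  | cons a s ha ih => simp [Finset.sum_cons, dotProduct_add, ih]

open Matrix in
private lemma vecMulVec_mulVec' {p' : ℕ} (a b u : Fin p' → ℝ) :
    vecMulVec a b *ᵥ u = (b ⬝ᵥ u) • a := by
  funext i
  show ∑ j, (a i * b j) * u j = (∑ j, b j * u j) * a i
  rw [Finset.sum_mul]
  exact Finset.sum_congr rfl fun j _ => by ring

theorem c_optimality_sufficiency
    {X : Type*} [Nonempty X] {p k m : ℕ}
    (f : Fin k → X → Fin p → ℝ) (x : Fin m → X) (w : Fin m → ℝ)
    (hw : ∀ r, 0 < w r) (hw1 : ∑ r, w r = 1)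
    (M : Matrix (Fin p) (Fin p) ℝ)
    (hM : M = ∑ r, w r • (∑ ℓ, vecMulVec (f ℓ (x r)) (f ℓ (x r))))
    (c d : Fin p → ℝ)
    (hMd : M *ᵥ d = c) (hcd : c ⬝ᵥ d = 1)
    (hbd : ∀ y : X, ∑ ℓ, (d ⬝ᵥ f ℓ y) ^ 2 ≤ 1) :
    ∀ (n : ℕ) (y : Fin n → X) (q : Fin n → ℝ),
      (∀ s, 0 ≤ q s) → (∑ s, q s = 1) →
      ∀ u : Fin p → ℝ,
        (∑ s, q s • (∑ ℓ, vecMulVec (f ℓ (y s)) (f ℓ (y s)))) *ᵥ u = c →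
        1 ≤ c ⬝ᵥ u := by
  intro n y q hq hq1 u hNu
  set N : Matrix (Fin p) (Fin p) ℝ :=
    ∑ s, q s • (∑ ℓ, vecMulVec (f ℓ (y s)) (f ℓ (y s))) with hN
  -- componentwise expansions
  have hdot : ∀ (v : Fin p → ℝ),
      v ⬝ᵥ (N *ᵥ u) = ∑ s, q s * ∑ ℓ, (v ⬝ᵥ f ℓ (y s)) * (f ℓ (y s) ⬝ᵥ u) := by
    intro v
    rw [hN, sum_mulVec', dotProduct_sum']
    refine Finset.sum_congr rfl fun s _ => ?_
    rw [Matrix.smul_mulVec, dotProduct_smul, smul_eq_mul, sum_mulVec',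
      dotProduct_sum']
    congr 1
    refine Finset.sum_congr rfl fun ℓ _ => ?_
    rw [vecMulVec_mulVec', dotProduct_smul, smul_eq_mul, mul_comm]
  have key1 : (1:ℝ) = ∑ s, q s * ∑ ℓ, (d ⬝ᵥ f ℓ (y s)) * (f ℓ (y s) ⬝ᵥ u) := by
    rw [← hdot d, hNu, dotProduct_comm, hcd]
  have key2 : c ⬝ᵥ u = ∑ s, q s * ∑ ℓ, (u ⬝ᵥ f ℓ (y s)) * (f ℓ (y s) ⬝ᵥ u) := by
    rw [← hdot u, hNu, dotProduct_comm]
  -- Cauchy–Schwarz over the sigma index (s, ℓ)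
  have hcs := Finset.sum_mul_sq_le_sq_mul_sq (Finset.univ : Finset (Fin n × Fin k))
    (fun p => Real.sqrt (q p.1) * (d ⬝ᵥ f p.2 (y p.1)))
    (fun p => Real.sqrt (q p.1) * (f p.2 (y p.1) ⬝ᵥ u))
  have hsq : ∀ s, Real.sqrt (q s) * Real.sqrt (q s) = q s := fun s =>
    Real.mul_self_sqrt (hq s)
  have e1 : ∑ p : Fin n × Fin k,
      (Real.sqrt (q p.1) * (d ⬝ᵥ f p.2 (y p.1))) * (Real.sqrt (q p.1) * (f p.2 (y p.1) ⬝ᵥ u))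
      = ∑ s, q s * ∑ ℓ, (d ⬝ᵥ f ℓ (y s)) * (f ℓ (y s) ⬝ᵥ u) := by
    rw [Fintype.sum_prod_type]
    congr 1; ext s
    rw [Finset.mul_sum]
    congr 1; ext ℓ
    calc (Real.sqrt (q s) * (d ⬝ᵥ f ℓ (y s))) * (Real.sqrt (q s) * (f ℓ (y s) ⬝ᵥ u))
        = (Real.sqrt (q s) * Real.sqrt (q s)) * ((d ⬝ᵥ f ℓ (y s)) * (f ℓ (y s) ⬝ᵥ u)) := by ring
      _ = _ := by rw [hsq s]
  have e2 : ∑ p : Fin n × Fin k, (Real.sqrt (q p.1) * (d ⬝ᵥ f p.2 (y p.1))) ^ 2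
      = ∑ s, q s * ∑ ℓ, (d ⬝ᵥ f ℓ (y s)) ^ 2 := by
    rw [Fintype.sum_prod_type]
    congr 1; ext s
    rw [Finset.mul_sum]
    congr 1; ext ℓ
    rw [mul_pow, Real.sq_sqrt (hq s)]
  have e3 : ∑ p : Fin n × Fin k, (Real.sqrt (q p.1) * (f p.2 (y p.1) ⬝ᵥ u)) ^ 2
      = ∑ s, q s * ∑ ℓ, (u ⬝ᵥ f ℓ (y s)) * (f ℓ (y s) ⬝ᵥ u) := by
    rw [Fintype.sum_prod_type]
    congr 1; ext s
    rw [Finset.mul_sum]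
    congr 1; ext ℓ
    rw [mul_pow, Real.sq_sqrt (hq s), dotProduct_comm u, sq]
  rw [e1, e2, e3, ← key1, ← key2] at hcs
  have hleft : (∑ s, q s * ∑ ℓ, (d ⬝ᵥ f ℓ (y s)) ^ 2) ≤ 1 := by
    calc ∑ s, q s * ∑ ℓ, (d ⬝ᵥ f ℓ (y s)) ^ 2
        ≤ ∑ s, q s * 1 := by
          apply Finset.sum_le_sum
          intro s _
          exact mul_le_mul_of_nonneg_left (hbd (y s)) (hq s)
      _ = 1 := by simp [hq1]
  have hcu_nonneg : 0 ≤ c ⬝ᵥ u := by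
    rw [key2]
    apply Finset.sum_nonneg
    intro s _
    apply mul_nonneg (hq s)
    apply Finset.sum_nonneg
    intro ℓ _
    rw [dotProduct_comm]
    exact mul_self_nonneg _
  nlinarith [hcs, hleft, hcu_nonneg]
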